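/- Let ξ be an integrable real-valued random variable whose distribution is symmetric about zero (ξ and −ξ have the same law), and let δ > 0. Define g(t) = E[√((t − ξ)² + δ²)]. Then for all t₁, t₂ ∈ ℝ, g(t₂) − g(t₁) ≤ (1/(2δ)) |t₂² − t₁²|. -/

import Mathlib

lemma sqrt_term_hasDerivAt (δ x t : ℝ) (hδ : 0 < δ) :
    HasDerivAt (fun t => Real.sqrt ((t - x)^2 + δ^2))
      ((t - x) / Real.sqrt ((t - x)^2 + δ^2)) t := by
  have hpos : 0 < (t - x)^2 + δ^2 := by positivity
  have hq : HasDerivAt (fun t : ℝ => (t - x)^2 + δ^2) (2 * (t - x)) t := by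
    have h := ((hasDerivAt_id t).sub_const x).pow 2
    simpa [mul_comm] using h.add_const (δ^2)
  have h2 := (Real.hasDerivAt_sqrt hpos.ne').comp t hq
  have hA : Real.sqrt ((t - x)^2 + δ^2) ≠ 0 := by positivity
  refine h2.congr_deriv ?_
  field_simp

lemma F_hasDerivAt (δ x t : ℝ) (hδ : 0 < δ) :
    HasDerivAt (fun t => Real.sqrt ((t - x)^2 + δ^2) + Real.sqrt ((t + x)^2 + δ^2))
      ((t - x) / Real.sqrt ((t - x)^2 + δ^2) + (t + x) / Real.sqrt ((t + x)^2 + δ^2)) t := by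
  have h1 := sqrt_term_hasDerivAt δ x t hδ
  have h2 := sqrt_term_hasDerivAt δ (-x) t hδ
  simp only [sub_neg_eq_add] at h2
  exact h1.add h2

lemma deriv_bounds (δ x t : ℝ) (hδ : 0 < δ) (hx : 0 ≤ x) (ht : 0 ≤ t) :
    0 ≤ (t - x) / Real.sqrt ((t - x)^2 + δ^2) + (t + x) / Real.sqrt ((t + x)^2 + δ^2) ∧
    (t - x) / Real.sqrt ((t - x)^2 + δ^2) + (t + x) / Real.sqrt ((t + x)^2 + δ^2) ≤ 2 * t / δ := by
  set A := Real.sqrt ((t - x)^2 + δ^2) with hA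
  set B := Real.sqrt ((t + x)^2 + δ^2) with hB
  have hApos : 0 < A := Real.sqrt_pos.2 (by positivity)
  have hBpos : 0 < B := Real.sqrt_pos.2 (by positivity)
  have hA2 : A^2 = (t - x)^2 + δ^2 := Real.sq_sqrt (by positivity)
  have hB2 : B^2 = (t + x)^2 + δ^2 := Real.sq_sqrt (by positivity)
  have hAδ : δ ≤ A := by nlinarith
  have hBδ : δ ≤ B := by nlinarith
  have hAB : A ≤ B := by rw [hA, hB]; apply Real.sqrt_le_sqrt; nlinarith
  constructor
  · rw [div_add_div _ _ hApos.ne' hBpos.ne', le_div_iff₀ (by positivity)]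
    have hsq : ((t - x) * B)^2 ≤ ((t + x) * A)^2 := by nlinarith [mul_nonneg ht hx]
    nlinarith [mul_nonneg (show (0:ℝ) ≤ t + x by linarith) hApos.le]
  · rw [div_add_div _ _ hApos.ne' hBpos.ne', div_le_div_iff₀ (by positivity) hδ]
    nlinarith [mul_nonneg (mul_nonneg (show (0:ℝ) ≤ 2 * t by linarith) hBpos.le)
        (show (0:ℝ) ≤ A - δ by linarith),
      mul_nonneg (mul_nonneg (show (0:ℝ) ≤ t + x by linarith) hδ.le)
        (show (0:ℝ) ≤ B - A by linarith)]

lemma F_mono (δ x : ℝ) (hδ : 0 < δ) (hx : 0 ≤ x) :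
    MonotoneOn (fun t => Real.sqrt ((t - x)^2 + δ^2) + Real.sqrt ((t + x)^2 + δ^2))
      (Set.Ici (0:ℝ)) := by
  have hdiff : ∀ t : ℝ, HasDerivAt (fun t => Real.sqrt ((t - x)^2 + δ^2) +
      Real.sqrt ((t + x)^2 + δ^2))
      ((t - x) / Real.sqrt ((t - x)^2 + δ^2) + (t + x) / Real.sqrt ((t + x)^2 + δ^2)) t :=
    fun t => F_hasDerivAt δ x t hδ
  apply monotoneOn_of_deriv_nonneg (convex_Ici 0)
  · exact (Differentiable.continuous (fun t => (hdiff t).differentiableAt)).continuousOn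
  · exact fun t _ => ((hdiff t).differentiableAt).differentiableWithinAt
  · intro t ht
    rw [interior_Ici] at ht
    rw [(hdiff t).deriv]
    exact (deriv_bounds δ x t hδ hx ht.le).1

lemma H_mono (δ x : ℝ) (hδ : 0 < δ) (hx : 0 ≤ x) :
    MonotoneOn (fun t => t^2 / δ -
      (Real.sqrt ((t - x)^2 + δ^2) + Real.sqrt ((t + x)^2 + δ^2)))
      (Set.Ici (0:ℝ)) := by
  have hdiff : ∀ t : ℝ, HasDerivAt (fun t => t^2 / δ - (Real.sqrt ((t - x)^2 + δ^2) +
      Real.sqrt ((t + x)^2 + δ^2)))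
      (2 * t / δ - ((t - x) / Real.sqrt ((t - x)^2 + δ^2) +
        (t + x) / Real.sqrt ((t + x)^2 + δ^2))) t := by
    intro t
    have h1 : HasDerivAt (fun t : ℝ => t^2 / δ) (2 * t / δ) t := by
      have := ((hasDerivAt_id t).pow 2).div_const δ
      simpa [mul_comm] using this
    exact h1.sub (F_hasDerivAt δ x t hδ)
  apply monotoneOn_of_deriv_nonneg (convex_Ici 0)
  · exact (Differentiable.continuous (fun t => (hdiff t).differentiableAt)).continuousOn
  · exact fun t _ => ((hdiff t).differentiableAt).differentiableWithinAt
  · intro t ht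
    rw [interior_Ici] at ht
    rw [(hdiff t).deriv]
    have := (deriv_bounds δ x t hδ hx ht.le).2
    linarith

lemma abs_reduce (δ : ℝ) (t x : ℝ) :
    Real.sqrt ((t - x)^2 + δ^2) + Real.sqrt ((t + x)^2 + δ^2)
      = Real.sqrt ((|t| - |x|)^2 + δ^2) + Real.sqrt ((|t| + |x|)^2 + δ^2) := by
  rcases abs_cases t with ⟨h1, _⟩ | ⟨h1, _⟩ <;> rcases abs_cases x with ⟨h2, _⟩ | ⟨h2, _⟩ <;>
    rw [h1, h2] <;> ring_nf <;> rw [add_comm]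

lemma key_pointwise (δ : ℝ) (hδ : 0 < δ) (x t₁ t₂ : ℝ) :
    Real.sqrt ((t₂ - x)^2 + δ^2) + Real.sqrt ((t₂ + x)^2 + δ^2)
      ≤ Real.sqrt ((t₁ - x)^2 + δ^2) + Real.sqrt ((t₁ + x)^2 + δ^2) + |t₂^2 - t₁^2| / δ := by
  rw [abs_reduce δ t₁ x, abs_reduce δ t₂ x]
  have ha : (0:ℝ) ≤ |t₁| := abs_nonneg _
  have hb : (0:ℝ) ≤ |t₂| := abs_nonneg _
  have hx : (0:ℝ) ≤ |x| := abs_nonneg _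
  have hsq1 : |t₁|^2 = t₁^2 := sq_abs t₁
  have hsq2 : |t₂|^2 = t₂^2 := sq_abs t₂
  rcases le_total (|t₁|) (|t₂|) with h | h
  · have := H_mono δ |x| hδ hx ha hb h
    simp only at this
    have habs : |t₂^2 - t₁^2| = t₂^2 - t₁^2 := by
      rw [abs_of_nonneg]; nlinarith
    rw [habs]
    have hd : |t₂|^2 / δ - |t₁|^2 / δ = (t₂^2 - t₁^2) / δ := by rw [hsq1, hsq2]; ring
    linarith [this, hd]
  · have := F_mono δ |x| hδ hx hb ha h
    simp only at this
    have : (0:ℝ) ≤ |t₂^2 - t₁^2| / δ := by positivity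
    linarith [F_mono δ |x| hδ hx hb ha h]

lemma sqrt_sq_add_le (u δ : ℝ) (hδ : 0 ≤ δ) : Real.sqrt (u^2 + δ^2) ≤ |u| + δ := by
  rw [show |u| + δ = Real.sqrt ((|u| + δ)^2) from (Real.sqrt_sq (by positivity)).symm]
  apply Real.sqrt_le_sqrt
  nlinarith [abs_nonneg u, sq_abs u]

open MeasureTheory
open scoped ProbabilityTheory

theorem expected_pseudoHuber_upper_increment
    {Ω : Type*} [MeasureSpace Ω] [IsProbabilityMeasure (ℙ : Measure Ω)]
    (ξ : Ω → ℝ) (hmeas : Measurable ξ) (hint : Integrable ξ)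
    (hsym : Measure.map ξ (ℙ : Measure Ω) = Measure.map (fun ω => -ξ ω) (ℙ : Measure Ω))
    (δ : ℝ) (hδ : 0 < δ) (t₁ t₂ : ℝ) :
    (∫ ω, Real.sqrt ((t₂ - ξ ω) ^ 2 + δ ^ 2)) - (∫ ω, Real.sqrt ((t₁ - ξ ω) ^ 2 + δ ^ 2)) ≤
      (1 / (2 * δ)) * |t₂ ^ 2 - t₁ ^ 2| := by
  have hcont : ∀ t : ℝ, Continuous fun y : ℝ => Real.sqrt ((t - y)^2 + δ^2) := by
    intro t; fun_prop
  -- integrability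
  have hInt : ∀ t : ℝ, Integrable (fun ω => Real.sqrt ((t - ξ ω)^2 + δ^2)) ℙ := by
    intro t
    apply Integrable.mono' (hint.abs.add (integrable_const (|t| + δ)))
    · exact ((hcont t).measurable.comp hmeas).aestronglyMeasurable
    · filter_upwards with ω
      simp only [Pi.add_apply]
      rw [Real.norm_eq_abs, abs_of_nonneg (Real.sqrt_nonneg _)]
      have h1 : |t - ξ ω| ≤ |t| + |ξ ω| := by
        have h := abs_sub_le t 0 (ξ ω)
        simp only [sub_zero, zero_sub, abs_neg] at h
        linarith
      have h2 : Real.sqrt ((t - ξ ω)^2 + δ^2) ≤ |t - ξ ω| + δ := sqrt_sq_add_le _ _ hδ.le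
      linarith
  have hInt' : ∀ t : ℝ, Integrable (fun ω => Real.sqrt ((t + ξ ω)^2 + δ^2)) ℙ := by
    intro t
    have h := hInt (-t)
    simpa [show ∀ y : ℝ, (-t - y)^2 = (t + y)^2 from fun y => by ring] using h
  -- symmetry
  have hSym : ∀ t : ℝ, (∫ ω, Real.sqrt ((t - ξ ω)^2 + δ^2))
      = ∫ ω, Real.sqrt ((t + ξ ω)^2 + δ^2) := by
    intro t
    calc (∫ ω, Real.sqrt ((t - ξ ω)^2 + δ^2))
        = ∫ y, Real.sqrt ((t - y)^2 + δ^2) ∂(Measure.map ξ ℙ) :=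
          (integral_map hmeas.aemeasurable (hcont t).aestronglyMeasurable).symm
      _ = ∫ y, Real.sqrt ((t - y)^2 + δ^2) ∂(Measure.map (fun ω => -ξ ω) ℙ) := by rw [hsym]
      _ = ∫ ω, Real.sqrt ((t - (-ξ ω))^2 + δ^2) :=
          integral_map hmeas.neg.aemeasurable (hcont t).aestronglyMeasurable
      _ = ∫ ω, Real.sqrt ((t + ξ ω)^2 + δ^2) := by
          congr 1; funext ω; rw [sub_neg_eq_add]
  have hI : ∀ t : ℝ, Integrable (fun ω => Real.sqrt ((t - ξ ω)^2 + δ^2)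
      + Real.sqrt ((t + ξ ω)^2 + δ^2)) ℙ := fun t => (hInt t).add (hInt' t)
  -- integral of the symmetrized sum
  have hsum : ∀ t : ℝ, (∫ ω, (Real.sqrt ((t - ξ ω)^2 + δ^2) + Real.sqrt ((t + ξ ω)^2 + δ^2)))
      = 2 * ∫ ω, Real.sqrt ((t - ξ ω)^2 + δ^2) := by
    intro t
    rw [integral_add (hInt t) (hInt' t), ← hSym t]; ring
  -- pointwise bound integrated
  have hmono : (∫ ω, (Real.sqrt ((t₂ - ξ ω)^2 + δ^2) + Real.sqrt ((t₂ + ξ ω)^2 + δ^2)))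
      ≤ ∫ ω, ((Real.sqrt ((t₁ - ξ ω)^2 + δ^2) + Real.sqrt ((t₁ + ξ ω)^2 + δ^2))
          + |t₂^2 - t₁^2| / δ) := by
    apply integral_mono (hI t₂) ((hI t₁).add (integrable_const _))
    intro ω
    exact key_pointwise δ hδ (ξ ω) t₁ t₂
  rw [integral_add (hI t₁) (integrable_const _), integral_const,
    probReal_univ, one_smul, hsum t₁, hsum t₂] at hmono
  have h2δ : (0:ℝ) < 2 * δ := by linarith
  rw [show (1 / (2 * δ)) * |t₂ ^ 2 - t₁ ^ 2| = (|t₂^2 - t₁^2| / δ) / 2 by ring]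
  linarith
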